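/- Assume a < b. Then f(−a²) = 0 if and only if x_c = 0, and f(−b²) = 0 if and only if y_c = 0. Explicitly, f(−a²) = x_c²(a² − b²)/b² and f(−b²) = −y_c²(a² − b²)/a². -/

import Mathlib

open Matrix Polynomial

/-- The 4×4 matrix of the elliptic paraboloid x²/a² + y²/b² - z = 0. -/
noncomputable def Pmat (a b : ℝ) : Matrix (Fin 4) (Fin 4) ℝ :=
  !![1/a^2, 0, 0, 0;
     0, 1/b^2, 0, 0;
     0, 0, 0, -(1/2 : ℝ);
     0, 0, -(1/2 : ℝ), 0]

/-- The 4×4 matrix of the sphere (x-x_c)² + (y-y_c)² + (z-z_c)² = r². -/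
noncomputable def Smat (xc yc zc r : ℝ) : Matrix (Fin 4) (Fin 4) ℝ :=
  !![1, 0, 0, -xc;
     0, 1, 0, -yc;
     0, 0, 1, -zc;
     -xc, -yc, -zc, xc^2 + yc^2 + zc^2 - r^2]

/-- The characteristic polynomial f(λ) = det(λP + S), as a real polynomial in λ. -/
noncomputable def charPoly (a b xc yc zc r : ℝ) : Polynomial ℝ :=
  Matrix.det ((X : Polynomial ℝ) • (Pmat a b).map C + (Smat xc yc zc r).map C)


lemma eval_charPoly (a b xc yc zc r t : ℝ) :
    (charPoly a b xc yc zc r).eval t = (t • Pmat a b + Smat xc yc zc r).det := by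
  have h : ((X : Polynomial ℝ) • (Pmat a b).map C + (Smat xc yc zc r).map C).map (eval t)
      = t • Pmat a b + Smat xc yc zc r := by
    ext i j
    simp only [Matrix.map_apply, Matrix.add_apply, Matrix.smul_apply, smul_eq_mul,
      eval_mul, eval_add, eval_X, eval_C]
  rw [charPoly, show (Polynomial.eval t : Polynomial ℝ → ℝ) = ⇑(evalRingHom t) from rfl,
    RingHom.map_det, RingHom.mapMatrix_apply]
  rw [show ⇑(evalRingHom t) = (Polynomial.eval t : Polynomial ℝ → ℝ) from rfl, h]

/-- values of f at -a² and -b², and the root criteria in terms of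
x_c and y_c (for a < b). -/
theorem charPoly_eval_neg_a_sq_neg_b_sq (a b r xc yc zc : ℝ)
    (ha : 0 < a) (hab : a < b) (hr : 0 < r) :
    (charPoly a b xc yc zc r).eval (-a^2) = xc^2 * (a^2 - b^2) / b^2 ∧
    (charPoly a b xc yc zc r).eval (-b^2) = -(yc^2 * (a^2 - b^2) / a^2) ∧
    ((charPoly a b xc yc zc r).IsRoot (-a^2) ↔ xc = 0) ∧
    ((charPoly a b xc yc zc r).IsRoot (-b^2) ↔ yc = 0) := by
  have ha0 : a ≠ 0 := ne_of_gt ha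
  have hb0 : b ≠ 0 := ne_of_gt (lt_trans ha hab)
  have h1 : (charPoly a b xc yc zc r).eval (-a^2) = xc^2 * (a^2 - b^2) / b^2 := by
    rw [eval_charPoly]
    simp [Pmat, Smat, Matrix.det_succ_row_zero, Fin.sum_univ_succ]
    norm_num [Fin.castSucc, Fin.castAdd, Fin.castLE]
    field_simp
    rw [show ∀ x : ℝ, (![0, 0, 1, x] : Fin 4 → ℝ) (Fin.succAbove (3 : Fin 4) (2 : Fin 3)) = 1 from fun _ => rfl]
    ring
  have h2 : (charPoly a b xc yc zc r).eval (-b^2) = -(yc^2 * (a^2 - b^2) / a^2) := by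
    rw [eval_charPoly]
    simp [Pmat, Smat, Matrix.det_succ_row_zero, Fin.sum_univ_succ]
    norm_num [Fin.castSucc, Fin.castAdd, Fin.castLE]
    field_simp
    ring
  have hne : a^2 - b^2 ≠ 0 := by
    have : a^2 < b^2 := by nlinarith
    linarith
  refine ⟨h1, h2, ?_, ?_⟩
  · rw [Polynomial.IsRoot, h1]
    constructor
    · intro h
      have := (div_eq_zero_iff.mp h).resolve_right (pow_ne_zero 2 hb0)
      rcases mul_eq_zero.mp this with h' | h'
      · exact pow_eq_zero_iff (by norm_num) |>.mp h'
      · exact absurd h' hne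
    · intro h; simp [h]
  · rw [Polynomial.IsRoot, h2]
    constructor
    · intro h
      have h' : yc^2 * (a^2 - b^2) / a^2 = 0 := by linarith [neg_eq_zero.mp h]
      have := (div_eq_zero_iff.mp h').resolve_right (pow_ne_zero 2 ha0)
      rcases mul_eq_zero.mp this with h'' | h''
      · exact pow_eq_zero_iff (by norm_num) |>.mp h''
      · exact absurd h'' hne
    · intro h; simp [h]
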